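/- Let d ≥ 1, δ, r > 0, let M be a real symmetric d×d matrix with quadratic form f(x) = (1/2)·xᵀMx, and let S ⊆ ℝ^d be a nonempty closed linear cone. Let x̂ ∈ ℝ^d with ‖x̂‖ = r and f(x̂) < -δ. If (1) there exists x ∈ S with ‖x‖ ≤ r and f(x) < -δ, and (2) f(x) ≥ -δ for every x ∈ ∂S with ‖x‖ ≤ r, then either x̂ ∈ S or -x̂ ∈ S. -/

import Mathlib

open scoped RealInnerProductSpace

lemma aux_frontier {X : Type*} [TopologicalSpace X] {s t : Set X} (hs : IsPreconnected s)
    (h1 : (s ∩ t).Nonempty) (h2 : (s \ t).Nonempty) : (s ∩ frontier t).Nonempty := by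
  by_contra h
  have hfr : ∀ x ∈ s, x ∉ frontier t := by
    intro x hx hxf
    exact h ⟨x, hx, hxf⟩
  have hsub : s ⊆ interior t ∪ (closure t)ᶜ := by
    intro x hx
    by_cases hxc : x ∈ closure t
    · left
      by_contra hxi
      exact hfr x hx ⟨hxc, hxi⟩
    · right; exact hxc
  have h1' : (s ∩ interior t).Nonempty := by
    obtain ⟨x, hxs, hxt⟩ := h1
    refine ⟨x, hxs, ?_⟩
    by_contra hxi
    exact hfr x hxs ⟨subset_closure hxt, hxi⟩
  have h2' : (s ∩ (closure t)ᶜ).Nonempty := by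
    obtain ⟨x, hxs, hxt⟩ := h2
    refine ⟨x, hxs, ?_⟩
    intro hxc
    exact hfr x hxs ⟨hxc, fun hxi => hxt (interior_subset hxi)⟩
  obtain ⟨y, _, hy1, hy2⟩ := hs _ _ isOpen_interior isClosed_closure.isOpen_compl hsub h1' h2'
  exact hy2 (subset_closure (interior_subset hy1))

theorem stmt1 (d : ℕ) (hd : 1 ≤ d) (δ r : ℝ) (hδ : 0 < δ) (hr : 0 < r)
    (M : Matrix (Fin d) (Fin d) ℝ) (hM : M.IsSymm)
    (f : EuclideanSpace ℝ (Fin d) → ℝ)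
    (hf : ∀ x : EuclideanSpace ℝ (Fin d),
      f x = (1 / 2) * ⟪x, (WithLp.toLp 2 (M.mulVec x) : EuclideanSpace ℝ (Fin d))⟫)
    (S : Set (EuclideanSpace ℝ (Fin d))) (hSne : S.Nonempty) (hScl : IsClosed S)
    (hScone : ∀ x ∈ S, ∀ α : ℝ, 0 ≤ α → α • x ∈ S)
    (xh : EuclideanSpace ℝ (Fin d)) (hxh : ‖xh‖ = r) (hfxh : f xh < -δ)
    (h1 : ∃ x ∈ S, ‖x‖ ≤ r ∧ f x < -δ)
    (h2 : ∀ x ∈ frontier S, ‖x‖ ≤ r → f x ≥ -δ) :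
    xh ∈ S ∨ -xh ∈ S := by
  obtain ⟨x₀, hx₀S, hx₀r, hfx₀⟩ := h1
  -- quadratic identity for f
  have keyf : ∀ (a b : ℝ) (y z : EuclideanSpace ℝ (Fin d)),
      f (a • y + b • z) = a^2 * f y + b^2 * f z + a*b*(f (y+z) - f y - f z) := by
    intro a b y z
    have hadd : ∀ u v : EuclideanSpace ℝ (Fin d),
        (WithLp.toLp 2 (M.mulVec (WithLp.ofLp (u + v))) : EuclideanSpace ℝ (Fin d)) = WithLp.toLp 2 (M.mulVec u) + WithLp.toLp 2 (M.mulVec v) := fun u v => by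
      simp [Matrix.mulVec_add]
    have hsmul : ∀ (c : ℝ) (u : EuclideanSpace ℝ (Fin d)),
        (WithLp.toLp 2 (M.mulVec (WithLp.ofLp (c • u))) : EuclideanSpace ℝ (Fin d)) = c • WithLp.toLp 2 (M.mulVec u) := fun c u => by
      simp [Matrix.mulVec_smul]
    simp only [hf, hadd, hsmul, inner_add_left, inner_add_right, inner_smul_left,
      inner_smul_right, conj_trivial]
    ring
  set G : EuclideanSpace ℝ (Fin d) → ℝ := fun y => f y + (δ/r^2) * ‖y‖^2 with hGdef
  have keyG : ∀ (a b : ℝ) (y z : EuclideanSpace ℝ (Fin d)),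
      G (a • y + b • z) = a^2 * G y + b^2 * G z + a*b*(G (y+z) - G y - G z) := by
    intro a b y z
    have hn : ∀ (a b : ℝ) (y z : EuclideanSpace ℝ (Fin d)),
        ‖a • y + b • z‖^2 = a^2 * ‖y‖^2 + b^2 * ‖z‖^2 + a*b*(‖y+z‖^2 - ‖y‖^2 - ‖z‖^2) := by
      intro a b y z
      simp only [← real_inner_self_eq_norm_sq, inner_add_left, inner_add_right,
        inner_smul_left, inner_smul_right, conj_trivial]
      ring
    simp only [hGdef]
    rw [keyf, hn]
    ring
  have hGsc : ∀ (c : ℝ) (y : EuclideanSpace ℝ (Fin d)), G (c • y) = c^2 * G y := by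
    intro c y
    have := keyG c 0 y y
    simpa using this
  have hf0 : f 0 = 0 := by
    have := keyf 0 0 0 0
    simpa using this
  have hG0 : G 0 = 0 := by simp [hGdef, hf0]
  have hrr : (δ/r^2) * r^2 = δ := by field_simp
  have hGx₀ : G x₀ < 0 := by
    have hx2 : ‖x₀‖^2 ≤ r^2 := by nlinarith [norm_nonneg x₀]
    have hc : (δ/r^2) * ‖x₀‖^2 ≤ (δ/r^2) * r^2 :=
      mul_le_mul_of_nonneg_left hx2 (by positivity)
    simp only [hGdef]
    nlinarith
  have hGxh : G xh < 0 := by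
    simp only [hGdef, hxh]
    nlinarith
  -- key claim
  have key : ∀ w : EuclideanSpace ℝ (Fin d), ‖w‖ = r → G w < 0 → (G (x₀ + w) - G x₀ - G w) ≤ 0 → w ∈ S := by
    intro w hw hGw hcw
    set p : ℝ → EuclideanSpace ℝ (Fin d) := fun t => (1-t) • x₀ + t • w with hpdef
    have hGp : ∀ t ∈ Set.Icc (0:ℝ) 1, G (p t) < 0 := by
      intro t ht
      have hid := keyG (1-t) t x₀ w
      have h3 : t*(1-t)*(G (x₀ + w) - G x₀ - G w) ≤ 0 :=
        mul_nonpos_of_nonneg_of_nonpos (mul_nonneg ht.1 (by linarith [ht.2])) hcw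
      have hm : max (G x₀) (G w) < 0 := max_lt hGx₀ hGw
      have h5 : (1-t)^2 * G x₀ ≤ (1-t)^2 * max (G x₀) (G w) :=
        mul_le_mul_of_nonneg_left (le_max_left _ _) (sq_nonneg _)
      have h6 : t^2 * G w ≤ t^2 * max (G x₀) (G w) :=
        mul_le_mul_of_nonneg_left (le_max_right _ _) (sq_nonneg _)
      have h7 : ((1-t)^2 + t^2) * max (G x₀) (G w) ≤ (1/2) * max (G x₀) (G w) := by
        nlinarith [sq_nonneg (1-2*t)]
      simp only [hpdef]
      rw [hid]
      nlinarith
    have hp0 : ∀ t ∈ Set.Icc (0:ℝ) 1, p t ≠ 0 := by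
      intro t ht hz
      have := hGp t ht
      rw [hz, hG0] at this
      exact lt_irrefl 0 this
    set q : ℝ → EuclideanSpace ℝ (Fin d) := fun t => (r / ‖p t‖) • p t with hqdef
    have hqn : ∀ t ∈ Set.Icc (0:ℝ) 1, ‖q t‖ = r := by
      intro t ht
      have hpt : ‖p t‖ ≠ 0 := norm_ne_zero_iff.2 (hp0 t ht)
      simp only [hqdef, norm_smul, Real.norm_eq_abs, abs_div, abs_of_pos hr,
        abs_norm]
      field_simp
    have hfq : ∀ t ∈ Set.Icc (0:ℝ) 1, f (q t) < -δ := by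
      intro t ht
      have hpt : ‖p t‖ ≠ 0 := norm_ne_zero_iff.2 (hp0 t ht)
      have hGq : G (q t) < 0 := by
        rw [hqdef, hGsc]
        have hpos : (r / ‖p t‖)^2 > 0 := by positivity
        exact mul_neg_of_pos_of_neg hpos (hGp t ht)
      have hGq' : G (q t) = f (q t) + δ := by
        simp only [hGdef]
        rw [hqn t ht, hrr]
      linarith [hGq'.symm.trans_lt hGq]
    have hq0 : q 0 ∈ S := by
      have hp00 : p 0 = x₀ := by simp [hpdef]
      rw [hqdef]
      simp only [hp00]
      exact hScone x₀ hx₀S _ (by positivity)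
    have hq1 : q 1 = w := by
      have hp1 : p 1 = w := by simp [hpdef]
      rw [hqdef]
      simp only [hp1, hw]
      rw [div_self hr.ne', one_smul]
    by_contra hwS
    have hpc : Continuous p := by
      apply Continuous.add
      · exact (continuous_const.sub continuous_id).smul continuous_const
      · exact continuous_id.smul continuous_const
    have hqc : ContinuousOn q (Set.Icc 0 1) := by
      apply ContinuousOn.fun_smul
      · exact continuousOn_const.div hpc.norm.continuousOn
          (fun t ht => norm_ne_zero_iff.2 (hp0 t ht))
      · exact hpc.continuousOn
    have hK : IsPreconnected (q '' Set.Icc 0 1) :=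
      (isPreconnected_Icc).image q hqc
    have hK1 : (q '' Set.Icc 0 1 ∩ S).Nonempty :=
      ⟨q 0, ⟨0, by simp, rfl⟩, hq0⟩
    have hK2 : (q '' Set.Icc 0 1 \ S).Nonempty :=
      ⟨q 1, ⟨1, by simp, rfl⟩, by rw [hq1]; exact hwS⟩
    obtain ⟨y, ⟨t, ht, rfl⟩, hyF⟩ := aux_frontier hK hK1 hK2
    have := h2 _ hyF (le_of_eq (hqn t ht))
    exact absurd this (not_le.2 (hfq t ht))
  -- choose sign
  rcases le_or_gt (G (x₀ + xh) - G x₀ - G xh) 0 with hc | hc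
  · exact Or.inl (key xh hxh hGxh hc)
  · right
    have hGneg : G (-xh) = G xh := by
      have := hGsc (-1) xh
      simpa using this
    have hid := keyG 1 (-1) x₀ xh
    have he : (1:ℝ) • x₀ + (-1 : ℝ) • xh = x₀ + -xh := by
      rw [one_smul, neg_one_smul]
    rw [he] at hid
    have hid' : G (x₀ + -xh) = G x₀ + G xh - (G (x₀ + xh) - G x₀ - G xh) := by
      rw [hid]; ring
    have hcross : G (x₀ + -xh) - G x₀ - G (-xh) ≤ 0 := by
      rw [hGneg]
      linarith
    exact key (-xh) (by rw [norm_neg, hxh]) (by rw [hGneg]; exact hGxh) hcross
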